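/- The potential kernel u(x,y) = ∫₀^∞ ∏_{i=1}^n p_t^{θ_i}(x_i,y_i) dt of n independent squared Bessel processes with dimensions θ_i > 0, θ₀ = ∑θ_i > 2, equals (1/2) S^{1−θ₀/2} ∏_i y_i^{θ_i/2−1} ∑_{m=0}^∞ Γ(θ₀/2−1+2m)(S^{−2m}/m!) ∑_{k₁+⋯+kₙ=m} C(m;k) ∏_i (x_i y_i)^{k_i}/Γ(θ_i/2+k_i), where S = ∑_i(x_i+y_i). -/

import Mathlib

open Finset

/-- The finite set of tuples `(k₁,…,kₙ)` of nonnegative integers with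
`k₁ + ⋯ + kₙ = m`. -/
def multiIdx (n m : ℕ) : Finset (Fin n → ℕ) :=
  (Fintype.piFinset fun _ : Fin n => Finset.range (m + 1)).filter fun k => ∑ i, k i = m

/-- The Gamma(r/2, 1/2) density `g_r(w) = 2^{−r/2} w^{r/2−1} e^{−w/2}/Γ(r/2)`. -/
noncomputable def gammaDens (r w : ℝ) : ℝ :=
  2 ^ (-r / 2) * w ^ (r / 2 - 1) * Real.exp (-w / 2) / Real.Gamma (r / 2)

/-- The BESQ^θ transition density
`p_t^θ(x,y) = t⁻¹ ∑ₖ e^{−x/2t} (x/2t)^k/k! · g_{θ+2k}(y/t)`. -/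
noncomputable def besqDens (t θ x y : ℝ) : ℝ :=
  t⁻¹ * ∑' k : ℕ,
    Real.exp (-x / (2 * t)) * (x / (2 * t)) ^ k / k.factorial
      * gammaDens (θ + 2 * k) (y / t)

/-- The explicit series for the potential kernel of `n` independent BESQ
processes. -/
noncomputable def potKernel {n : ℕ} (θ : Fin n → ℝ) (x y : Fin n → ℝ) : ℝ :=
  (1 / 2) * ((∑ i, (x i + y i)) ^ ((1 : ℝ) - (∑ i, θ i) / 2))
    * (∏ i, y i ^ (θ i / 2 - 1)) *
    ∑' m : ℕ,
      Real.Gamma ((∑ i, θ i) / 2 - 1 + 2 * m)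
        * ((∑ i, (x i + y i)) ^ (-(2 : ℝ) * m) / m.factorial) *
        ∑ k ∈ multiIdx n m,
          (Nat.multinomial Finset.univ k : ℝ) *
            ∏ i, (x i * y i) ^ (k i) / Real.Gamma (θ i / 2 + k i)

/-! ### Auxiliary lemmas -/

open Real MeasureTheory Set

section Aux

lemma summable_bessel {c : ℝ} (hc : 0 < c) {w : ℝ} (hw : 0 ≤ w) :
    Summable (fun k : ℕ => w ^ k / (k.factorial * Real.Gamma (c + k))) := by
  apply summable_of_ratio_norm_eventually_le (r := 1/2) (by norm_num)
  filter_upwards [Filter.eventually_ge_atTop (⌈2 * w⌉₊ + 1)] with k hk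
  have hg : 0 < Real.Gamma (c + k) := Real.Gamma_pos_of_pos (by positivity)
  have hg' : Real.Gamma (c + (k+1:ℕ)) = (c + k) * Real.Gamma (c + k) := by
    push_cast
    rw [show c + ((k:ℝ)+1) = (c + k) + 1 by ring, Real.Gamma_add_one (by positivity)]
  have h1 : (0:ℝ) < (k.factorial : ℝ) := by positivity
  have key : w ^ (k+1) / ((k+1).factorial * Real.Gamma (c + (k+1:ℕ)))
      = (w / ((k+1) * (c + k))) * (w ^ k / (k.factorial * Real.Gamma (c + k))) := by
    rw [hg', Nat.factorial_succ]
    push_cast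
    field_simp
    ring
  rw [Real.norm_eq_abs, Real.norm_eq_abs, abs_of_nonneg (by positivity),
    abs_of_nonneg (by positivity), key]
  have hr : w / ((k+1) * (c + k)) ≤ 1/2 := by
    rw [div_le_iff₀ (by positivity)]
    have h2w : 2 * w ≤ k := by
      calc 2*w ≤ (⌈2*w⌉₊ : ℝ) := Nat.le_ceil _
        _ ≤ k := by exact_mod_cast Nat.le_of_succ_le hk
    have hk1 : (1:ℝ) ≤ k := by
      have : 1 ≤ k := le_trans (Nat.succ_le_succ (Nat.zero_le _)) hk
      exact_mod_cast this
    nlinarith [mul_le_mul_of_nonneg_left (show (1:ℝ) ≤ c + k by nlinarith)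
      (le_of_lt (show (0:ℝ) < w/1 + 1 by positivity))]
  exact mul_le_mul_of_nonneg_right hr (by positivity)

lemma integrand_eq {a S : ℝ} {x : ℝ} (hx : x ∈ Ioi (0:ℝ)) :
    (|(-1:ℝ)| * x ^ ((-1:ℝ) - 1)) • ((x ^ (-1:ℝ)) ^ (a - 2) * Real.exp (-(S/2) * (x ^ (-1:ℝ)) ^ (1:ℝ)))
      = x ^ (-a) * Real.exp (-S / (2 * x)) := by
  have hx0 : (0:ℝ) < x := hx
  have h1 : ((x:ℝ) ^ (-1:ℝ)) ^ (a-2) = x ^ (2-a) := by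
    rw [← Real.rpow_mul hx0.le, show (-1:ℝ)*(a-2) = 2-a by ring]
  have h2 : -(S/2) * (x ^ (-1:ℝ)) ^ (1:ℝ) = -S/(2*x) := by
    rw [Real.rpow_one, Real.rpow_neg_one]; field_simp
  rw [h1, h2, smul_eq_mul, abs_neg, abs_one, one_mul,
    show (-1:ℝ) - 1 = -2 by ring, ← mul_assoc, ← Real.rpow_add hx0,
    show (-2:ℝ) + (2-a) = -a by ring]

lemma integrableOn_pot {a S : ℝ} (ha : 1 < a) (hS : 0 < S) :
    IntegrableOn (fun t : ℝ => t ^ (-a) * Real.exp (-S / (2 * t))) (Ioi 0) := by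
  have hbase : IntegrableOn (fun u : ℝ => u ^ (a - 2) * Real.exp (-(S/2) * u ^ (1:ℝ))) (Ioi 0) :=
    integrableOn_rpow_mul_exp_neg_mul_rpow (by linarith) one_pos (by positivity)
  have h := (integrableOn_Ioi_comp_rpow_iff
    (fun u : ℝ => u ^ (a - 2) * Real.exp (-(S/2) * u ^ (1:ℝ))) (p := (-1:ℝ)) (by norm_num)).mpr hbase
  exact (integrableOn_congr_fun (fun x hx => integrand_eq hx) measurableSet_Ioi).mp h

lemma integral_pot {a S : ℝ} (ha : 1 < a) (hS : 0 < S) :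
    ∫ t in Ioi (0:ℝ), t ^ (-a) * Real.exp (-S / (2 * t))
      = (S/2) ^ (1 - a) * Real.Gamma (a - 1) := by
  have h := integral_comp_rpow_Ioi
    (fun u : ℝ => u ^ (a - 2) * Real.exp (-(S/2) * u ^ (1:ℝ))) (p := (-1:ℝ)) (by norm_num)
  rw [← setIntegral_congr_fun measurableSet_Ioi (fun x hx => integrand_eq hx), h]
  have h2 : ∫ x in Ioi (0:ℝ), x ^ (a-2) * Real.exp (-(S/2) * x ^ (1:ℝ))
      = (S/2) ^ (-(a - 2 + 1)/1) * (1/1) * Real.Gamma ((a - 2 + 1)/1) :=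
    integral_rpow_mul_exp_neg_mul_rpow one_pos (by linarith) (by positivity)
  rw [h2, show -(a - 2 + 1) / 1 = 1 - a by ring, show (a - 2 + 1)/1 = a - 1 by ring]
  ring

lemma lintegral_pot {a S : ℝ} (ha : 1 < a) (hS : 0 < S) :
    ∫⁻ t in Ioi (0:ℝ), ENNReal.ofReal (t ^ (-a) * Real.exp (-S / (2 * t)))
      = ENNReal.ofReal ((S/2) ^ (1 - a) * Real.Gamma (a - 1)) := by
  rw [← ofReal_integral_eq_lintegral_ofReal (integrableOn_pot ha hS)
    ((ae_restrict_iff' measurableSet_Ioi).2 (Filter.Eventually.of_forall fun t ht => by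
      have ht0 : (0:ℝ) < t := ht
      positivity)),
    integral_pot ha hS]

lemma mem_multiIdx {n m : ℕ} {k : Fin n → ℕ} : k ∈ multiIdx n m ↔ ∑ i, k i = m := by
  constructor
  · exact fun h => (Finset.mem_filter.mp h).2
  · intro h
    refine Finset.mem_filter.mpr ⟨Fintype.mem_piFinset.mpr fun i => Finset.mem_range.mpr ?_, h⟩
    exact Nat.lt_succ_of_le (h ▸ Finset.single_le_sum (f := k) (fun _ _ => Nat.zero_le _)
      (Finset.mem_univ i))

/-- ENNReal: product over `Fin n` of tsums equals tsum over tuples. -/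
lemma prod_tsum_ennreal : ∀ (n : ℕ) (f : Fin n → ℕ → ENNReal),
    ∏ i, ∑' k, f i k = ∑' k : Fin n → ℕ, ∏ i, f i (k i) := by
  intro n
  induction n with
  | zero =>
    intro f
    simp [tsum_eq_single (default : Fin 0 → ℕ)
      (fun b hb => absurd (Subsingleton.elim b default) hb)]
  | succ n ih =>
    intro f
    rw [Fin.prod_univ_succ, ih fun i => f i.succ]
    calc (∑' k0 : ℕ, f 0 k0) * ∑' k : Fin n → ℕ, ∏ i, f i.succ (k i)
        = ∑' (k0 : ℕ) (k : Fin n → ℕ), f 0 k0 * ∏ i, f i.succ (k i) := by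
          rw [← ENNReal.tsum_mul_right]
          exact tsum_congr fun k0 => ENNReal.tsum_mul_left.symm
      _ = ∑' (p : ℕ × (Fin n → ℕ)), f 0 p.1 * ∏ i, f i.succ (p.2 i) :=
          (ENNReal.tsum_prod' (f := fun p : ℕ × (Fin n → ℕ) => f 0 p.1 * ∏ i, f i.succ (p.2 i))).symm
      _ = ∑' (p : ℕ × (Fin n → ℕ)),
            ∏ i, f i (Fin.cons (α := fun _ : Fin (n+1) => ℕ) p.1 p.2 i) := by
          refine tsum_congr fun p => ?_
          rw [Fin.prod_univ_succ, Fin.cons_zero]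
          exact congrArg _ (Finset.prod_congr rfl fun i _ => by rw [Fin.cons_succ])
      _ = ∑' k : Fin (n+1) → ℕ, ∏ i, f i (k i) := by
          exact Equiv.tsum_eq (Fin.consEquiv fun _ : Fin (n+1) => ℕ)
            (fun k : Fin (n+1) → ℕ => ∏ i, f i (k i))

/-- grouping a tsum over tuples by total degree (ENNReal). -/
lemma tsum_group_ennreal {n : ℕ} (f : (Fin n → ℕ) → ENNReal) :
    ∑' k : Fin n → ℕ, f k = ∑' m : ℕ, ∑ k ∈ multiIdx n m, f k := by
  have h1 : ∀ m : ℕ, ∑ k ∈ multiIdx n m, f k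
      = ∑' k : Fin n → ℕ, if ∑ i, k i = m then f k else 0 := by
    intro m
    symm
    refine (tsum_eq_sum (s := multiIdx n m)
      fun k hk => if_neg fun h => hk (mem_multiIdx.mpr h)).trans ?_
    exact Finset.sum_congr rfl fun k hk => if_pos (mem_multiIdx.mp hk)
  calc ∑' k : Fin n → ℕ, f k
      = ∑' (k : Fin n → ℕ) (m : ℕ), if ∑ i, k i = m then f k else 0 := by
        refine tsum_congr fun k => ?_
        rw [tsum_eq_single (∑ i, k i) fun m hm => if_neg fun h => hm h.symm, if_pos rfl]
    _ = ∑' (m : ℕ) (k : Fin n → ℕ), if ∑ i, k i = m then f k else 0 := ENNReal.tsum_comm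
    _ = ∑' m : ℕ, ∑ k ∈ multiIdx n m, f k := tsum_congr fun m => (h1 m).symm

/-- one clean summand of the BESQ density. -/
noncomputable def bTerm (θ x y : ℝ) (k : ℕ) (t : ℝ) : ℝ :=
  2 ^ (-θ/2 : ℝ) * y ^ (θ/2 - 1 : ℝ) * ((x*y/4) ^ k / (k.factorial * Real.Gamma (θ/2 + k)))
    * (t ^ (-(θ/2) - 2*(k:ℝ)) * Real.exp (-(x+y)/(2*t)))

lemma besq_eq {t θ x y : ℝ} (ht : 0 < t) (hθ : 0 < θ) (hy : 0 < y) :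
    besqDens t θ x y = ∑' k : ℕ, bTerm θ x y k t := by
  rw [besqDens, ← tsum_mul_left]
  refine tsum_congr fun k => ?_
  unfold gammaDens bTerm
  have hyt : (0:ℝ) < y/t := div_pos hy ht
  have hG : (0:ℝ) < Real.Gamma (θ/2 + k) := Real.Gamma_pos_of_pos (by positivity)
  have hkf : (0:ℝ) < (k.factorial:ℝ) := by positivity
  rw [show -(θ + 2*(k:ℝ))/2 = (-θ/2) + (-(k:ℝ)) by ring,
      show (θ + 2*(k:ℝ))/2 - 1 = (θ/2 - 1) + (k:ℝ) by ring,
      show (θ + 2*(k:ℝ))/2 = θ/2 + (k:ℝ) by ring]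
  rw [Real.rpow_add two_pos, Real.rpow_add hyt, Real.rpow_neg (le_of_lt two_pos),
      Real.rpow_natCast, Real.rpow_natCast, Real.div_rpow hy.le ht.le]
  have e1 : ((t:ℝ)^2)^k = t ^ (2*(k:ℝ)) := by
    rw [← pow_mul, ← Real.rpow_natCast t (2*k)]
    congr 1; push_cast; ring
  have e2 : t ^ ((θ/2 - 1:ℝ) + (1 + 2*(k:ℝ))) = t ^ (θ/2 - 1:ℝ) * (t * t^(2*(k:ℝ))) := by
    rw [Real.rpow_add ht, Real.rpow_add ht, Real.rpow_one]
  have hT : t ^ (-(θ/2) - 2*(k:ℝ)) = (t ^ (θ/2 - 1 : ℝ) * t * (t^2)^k)⁻¹ := by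
    rw [show -(θ/2) - 2*(k:ℝ) = -((θ/2 - 1) + (1 + 2*(k:ℝ))) by ring, Real.rpow_neg ht.le,
      e2, e1, mul_assoc]
  rw [hT]
  have hE : Real.exp (-x / (2*t)) * Real.exp (-(y/t)/2) = Real.exp (-(x+y)/(2*t)) := by
    rw [← Real.exp_add]; congr 1; field_simp; ring
  have hTp : (t : ℝ) ^ (θ/2 - 1 : ℝ) ≠ 0 := by positivity
  have hyp : (y : ℝ) ^ (θ/2 - 1 : ℝ) ≠ 0 := by positivity
  have h4 : (x*y/4:ℝ)^k = x^k * y^k * ((2:ℝ)^k * (2:ℝ)^k)⁻¹ := by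
    rw [div_pow, mul_pow, show ((4:ℝ)) = 2*2 by norm_num, mul_pow]
    ring
  rw [← hE, h4]
  field_simp
  rw [← mul_pow, ← mul_pow, ← mul_pow, ← mul_pow]
  congr 1; field_simp

lemma bTerm_nonneg {θ x y t : ℝ} (hθ : 0 < θ) (hx : 0 ≤ x) (hy : 0 ≤ y) (ht : 0 ≤ t) (k : ℕ) :
    0 ≤ bTerm θ x y k t := by
  have hG : (0:ℝ) < Real.Gamma (θ/2 + k) := Real.Gamma_pos_of_pos (by positivity)
  unfold bTerm
  positivity

lemma summable_bTerm {t θ x y : ℝ} (ht : 0 < t) (hθ : 0 < θ) (hx : 0 < x) (hy : 0 < y) :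
    Summable (fun k : ℕ => bTerm θ x y k t) := by
  have h2 : ∀ k : ℕ, (((t:ℝ)^2)⁻¹)^k = t ^ (-(2*(k:ℝ))) := by
    intro k
    rw [inv_pow, ← pow_mul, ← Real.rpow_natCast t (2*k), ← Real.rpow_neg ht.le]
    congr 1; push_cast; ring
  have key : ∀ k : ℕ, bTerm θ x y k t
      = (2 ^ (-θ/2 : ℝ) * y ^ (θ/2 - 1 : ℝ) * (t ^ (-(θ/2):ℝ) * Real.exp (-(x+y)/(2*t))))
        * ((x*y/4 * (t^2)⁻¹) ^ k / (k.factorial * Real.Gamma (θ/2 + k))) := by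
    intro k
    unfold bTerm
    have e1 : t ^ (-(θ/2) - 2*(k:ℝ)) = t ^ (-(θ/2):ℝ) * ((t^2)⁻¹) ^ k := by
      rw [h2 k, ← Real.rpow_add ht]
      exact congrArg (t ^ · : ℝ → ℝ) (by ring)
    rw [e1, mul_pow]
    ring
  exact Summable.congr ((summable_bessel (by positivity : (0:ℝ) < θ/2)
    (by positivity : (0:ℝ) ≤ x*y/4 * (t^2)⁻¹)).mul_left _) fun k => (key k).symm

lemma besq_nonneg {t θ x y : ℝ} (ht : 0 < t) (hθ : 0 < θ) (hx : 0 < x) (hy : 0 < y) :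
    0 ≤ besqDens t θ x y := by
  rw [besq_eq ht hθ hy]
  exact tsum_nonneg fun k => bTerm_nonneg hθ hx.le hy.le ht.le k

lemma prod_bTerm {n : ℕ} (θ x y : Fin n → ℝ) (k : Fin n → ℕ) {t : ℝ} (ht : 0 < t) :
    ∏ i, bTerm (θ i) (x i) (y i) (k i) t
      = (∏ i, 2 ^ (-θ i/2 : ℝ) * (y i) ^ (θ i/2 - 1 : ℝ)
          * ((x i * y i/4) ^ (k i) / ((k i).factorial * Real.Gamma (θ i/2 + k i))))
        * (t ^ (-((∑ i, θ i)/2 + 2*(((∑ i, k i : ℕ)):ℝ)))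
            * Real.exp (-(∑ i, (x i + y i))/(2*t))) := by
  unfold bTerm
  rw [Finset.prod_mul_distrib]
  have hpow : ∏ i, t ^ (-(θ i/2) - 2*((k i):ℝ))
      = t ^ (-((∑ i, θ i)/2 + 2*(((∑ i, k i : ℕ)):ℝ))) := by
    have : ∀ (s : Finset (Fin n)) (c : Fin n → ℝ), ∏ i ∈ s, t ^ (c i) = t ^ (∑ i ∈ s, c i) := by
      intro s c
      simp [Real.rpow_def_of_pos ht, ← Real.exp_sum, Finset.sum_mul, mul_comm]
    rw [this univ _]
    refine congrArg (t ^ · : ℝ → ℝ) ?_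
    rw [show ∑ i, (-(θ i/2) - 2*((k i):ℝ)) = ∑ i, (θ i * (-(1:ℝ)/2) + ((k i):ℝ) * (-2)) from
      Finset.sum_congr rfl fun i _ => by ring]
    rw [Finset.sum_add_distrib, ← Finset.sum_mul, ← Finset.sum_mul]
    push_cast
    ring
  have hexp : ∏ i, Real.exp (-(x i + y i)/(2*t)) = Real.exp (-(∑ i, (x i + y i))/(2*t)) := by
    rw [← Real.exp_sum]
    congr 1
    rw [← Finset.sum_div, ← Finset.sum_neg_distrib]
  congr 1
  rw [Finset.prod_mul_distrib, hpow, hexp]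

lemma const_id {S A : ℝ} (hS : 0 < S) (m : ℕ) :
    (2:ℝ) ^ (-A) * ((1:ℝ)/4) ^ m * (S/2) ^ (1 - (A + 2*(m:ℝ)))
      = 1/2 * S ^ ((1:ℝ) - A) * S ^ (-(2:ℝ)*(m:ℝ)) := by
  have h4 : ((1:ℝ)/4) ^ m = (2:ℝ) ^ (-(2*(m:ℝ))) := by
    rw [show ((1:ℝ)/4) = ((2:ℝ)^(2:ℕ))⁻¹ by norm_num, inv_pow, ← pow_mul,
      ← Real.rpow_natCast 2 (2*m), ← Real.rpow_neg (by norm_num : (0:ℝ) ≤ 2)]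
    exact congrArg ((2:ℝ) ^ · : ℝ → ℝ) (by push_cast; ring)
  rw [h4, Real.div_rpow hS.le (by norm_num : (0:ℝ) ≤ 2),
    show (1:ℝ) - (A + 2*(m:ℝ)) = ((1:ℝ) - A) + (-(2:ℝ)*(m:ℝ)) by ring, Real.rpow_add hS,
    div_eq_mul_inv, ← Real.rpow_neg (by norm_num : (0:ℝ) ≤ 2)]
  have h2 : (2:ℝ) ^ (-A) * ((2:ℝ) ^ (-(2*(m:ℝ))) * (2:ℝ) ^ (-(((1:ℝ) - A) + -(2:ℝ)*(m:ℝ))))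
      = 1/2 := by
    rw [← Real.rpow_add two_pos, ← Real.rpow_add two_pos,
      show -A + (-(2*(m:ℝ)) + -(((1:ℝ) - A) + -(2:ℝ)*(m:ℝ))) = -1 by ring, Real.rpow_neg_one]
    norm_num
  linear_combination (S ^ ((1:ℝ) - A) * S ^ (-(2:ℝ)*(m:ℝ))) * h2

lemma sum_multiIdx_eq {n : ℕ} (θ x y : Fin n → ℝ) (hθ : ∀ i, 0 < θ i)
    {S A : ℝ} (hS : 0 < S) (hA : A = (∑ i, θ i)/2) (m : ℕ) :
    ∑ k ∈ multiIdx n m,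
      (∏ i, 2 ^ (-θ i/2 : ℝ) * (y i) ^ (θ i/2 - 1 : ℝ)
          * ((x i * y i/4) ^ (k i) / ((k i).factorial * Real.Gamma (θ i/2 + k i))))
        * ((S/2) ^ (1 - (A + 2*(m:ℝ))) * Real.Gamma (A + 2*(m:ℝ) - 1))
    = (1/2 * S ^ ((1:ℝ) - A) * ∏ i, (y i) ^ (θ i/2 - 1 : ℝ)) *
        (Real.Gamma (A - 1 + 2*(m:ℝ)) * (S ^ (-(2:ℝ)*(m:ℝ)) / (m.factorial:ℝ)) *
          ∑ k ∈ multiIdx n m, (Nat.multinomial Finset.univ k : ℝ) *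
            ∏ i, (x i * y i) ^ (k i) / Real.Gamma (θ i/2 + (k i))) := by
  have hGam : Real.Gamma (A + 2*(m:ℝ) - 1) = Real.Gamma (A - 1 + 2*(m:ℝ)) :=
    congrArg Real.Gamma (by ring)
  have h2A : ∏ i, (2:ℝ) ^ (-θ i/2 : ℝ) = (2:ℝ) ^ (-A) := by
    rw [show ∀ (c : Fin n → ℝ), ∏ i, (2:ℝ) ^ (c i) = 2 ^ (∑ i, c i) from fun c => by
      simp [Real.rpow_def_of_pos two_pos, ← Real.exp_sum, Finset.sum_mul, mul_comm]]
    refine congrArg ((2:ℝ) ^ · : ℝ → ℝ) ?_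
    rw [hA, show ∑ i, (-θ i/2 : ℝ) = ∑ i, θ i * (-(1:ℝ)/2) from
      Finset.sum_congr rfl fun i _ => by ring, ← Finset.sum_mul]
    ring
  have hstep : ∀ k ∈ multiIdx n m,
      (∏ i, 2 ^ (-θ i/2 : ℝ) * (y i) ^ (θ i/2 - 1 : ℝ)
          * ((x i * y i/4) ^ (k i) / ((k i).factorial * Real.Gamma (θ i/2 + k i))))
        * ((S/2) ^ (1 - (A + 2*(m:ℝ))) * Real.Gamma (A + 2*(m:ℝ) - 1))
      = ((1/2 * S ^ ((1:ℝ) - A) * ∏ i, (y i) ^ (θ i/2 - 1 : ℝ)) *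
          (Real.Gamma (A - 1 + 2*(m:ℝ)) * (S ^ (-(2:ℝ)*(m:ℝ)) / (m.factorial:ℝ)))) *
        ((Nat.multinomial Finset.univ k : ℝ) *
          ∏ i, (x i * y i) ^ (k i) / Real.Gamma (θ i/2 + (k i))) := by
    intro k hk
    have hm : ∑ i, k i = m := mem_multiIdx.mp hk
    have hfact : (∏ i, (((k i).factorial:ℕ):ℝ)) * (Nat.multinomial Finset.univ k : ℝ)
        = (m.factorial : ℝ) := by
      rw [← Nat.cast_prod, ← Nat.cast_mul, Nat.multinomial_spec, hm]
    have hmultpos : (0:ℝ) < (Nat.multinomial Finset.univ k : ℝ) := by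
      exact_mod_cast Nat.multinomial_pos _ _
    have hprodpos : (0:ℝ) < ∏ i, (((k i).factorial:ℕ):ℝ) := by positivity
    have hFinv : (∏ i, (((k i).factorial:ℕ):ℝ))⁻¹
        = (Nat.multinomial Finset.univ k : ℝ) / (m.factorial : ℝ) := by
      rw [← hfact]
      field_simp
    have hci : ∀ i : Fin n,
        (x i * y i/4:ℝ)^(k i) / (((k i).factorial:ℝ) * Real.Gamma (θ i/2 + k i))
        = ((x i * y i)^(k i) / Real.Gamma (θ i/2 + (k i))) * ((1/4:ℝ)^(k i))
          * ((((k i).factorial:ℕ):ℝ))⁻¹ := by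
      intro i
      have hG : Real.Gamma (θ i/2 + k i) ≠ 0 :=
        ne_of_gt (Real.Gamma_pos_of_pos (by have := hθ i; positivity))
      have hf : (((k i).factorial:ℕ):ℝ) ≠ 0 := by positivity
      rw [div_eq_mul_one_div (x i * y i) 4, mul_pow]
      field_simp
    calc (∏ i, 2 ^ (-θ i/2 : ℝ) * (y i) ^ (θ i/2 - 1 : ℝ)
          * ((x i * y i/4) ^ (k i) / ((k i).factorial * Real.Gamma (θ i/2 + k i))))
        * ((S/2) ^ (1 - (A + 2*(m:ℝ))) * Real.Gamma (A + 2*(m:ℝ) - 1))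
        = ((2:ℝ) ^ (-A) * ((1:ℝ)/4)^m * (S/2) ^ (1 - (A + 2*(m:ℝ))))
          * ((∏ i, (y i) ^ (θ i/2 - 1 : ℝ))
            * (∏ i, (x i * y i) ^ (k i) / Real.Gamma (θ i/2 + (k i)))
            * ((Nat.multinomial Finset.univ k : ℝ) / (m.factorial : ℝ))
            * Real.Gamma (A - 1 + 2*(m:ℝ))) := by
          rw [Finset.prod_mul_distrib, Finset.prod_mul_distrib,
            show (∏ i, (x i * y i/4) ^ (k i) / ((k i).factorial * Real.Gamma (θ i/2 + k i)))
              = ∏ i, (((x i * y i)^(k i) / Real.Gamma (θ i/2 + (k i))) * ((1/4:ℝ)^(k i))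
                  * ((((k i).factorial:ℕ):ℝ))⁻¹) from Finset.prod_congr rfl fun i _ => hci i,
            Finset.prod_mul_distrib, Finset.prod_mul_distrib,
            Finset.prod_pow_eq_pow_sum, hm, hGam, h2A]
          rw [Finset.prod_inv_distrib, hFinv]
          ring
      _ = _ := by
          rw [const_id hS m]
          ring
  rw [Finset.sum_congr rfl hstep, ← Finset.mul_sum]
  ring

lemma meas_pot (c e S : ℝ) :
    Measurable (fun t : ℝ => ENNReal.ofReal (c * (t ^ e * Real.exp (-S/(2*t))))) := by
  apply Measurable.ennreal_ofReal
  apply Measurable.const_mul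
  exact (measurable_id.pow measurable_const).mul
    (Real.measurable_exp.comp (measurable_const.div (measurable_const.mul measurable_id)))

end Aux

/-- the potential kernel `u(x,y) = ∫₀^∞ ∏ᵢ p_t^{θᵢ}(xᵢ,yᵢ) dt`
equals the explicit series `potKernel`. -/
theorem stmt12 (n : ℕ) (θ : Fin n → ℝ) (hθ : ∀ i, 0 < θ i) (hθ0 : 2 < ∑ i, θ i)
    (x y : Fin n → ℝ) (hx : ∀ i, 0 < x i) (hy : ∀ i, 0 < y i) :
    ∫ t in Set.Ioi (0 : ℝ), ∏ i, besqDens t (θ i) (x i) (y i)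
      = potKernel θ x y := by
  classical
  have hn : 0 < n := by
    rcases Nat.eq_zero_or_pos n with rfl | hn
    · simp at hθ0; linarith
    · exact hn
  have hS : 0 < ∑ i, (x i + y i) :=
    Finset.sum_pos (fun i _ => add_pos (hx i) (hy i)) ⟨⟨0, hn⟩, Finset.mem_univ _⟩
  have hA1 : 1 < (∑ i, θ i)/2 := by linarith
  -- the coefficient attached to a multi-index
  set P1 : (Fin n → ℕ) → ℝ := fun k => ∏ i, 2 ^ (-θ i/2 : ℝ) * (y i) ^ (θ i/2 - 1 : ℝ)
      * ((x i * y i/4) ^ (k i) / ((k i).factorial * Real.Gamma (θ i/2 + k i))) with hP1def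
  have hP1nonneg : ∀ k, 0 ≤ P1 k := by
    intro k
    refine Finset.prod_nonneg fun i _ => ?_
    have hG : (0:ℝ) < Real.Gamma (θ i/2 + k i) := Real.Gamma_pos_of_pos (by have := hθ i; positivity)
    have := hx i; have := hy i
    positivity
  -- pointwise identity on `Ioi 0`
  have hpt : ∀ t ∈ Ioi (0:ℝ),
      ENNReal.ofReal (∏ i, besqDens t (θ i) (x i) (y i))
      = ∑' k : Fin n → ℕ, ENNReal.ofReal (P1 k *
          (t ^ (-((∑ i, θ i)/2 + 2*(((∑ i, k i : ℕ)):ℝ)))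
            * Real.exp (-(∑ i, (x i + y i))/(2*t)))) := by
    intro t ht
    have ht0 : (0:ℝ) < t := ht
    rw [ENNReal.ofReal_prod_of_nonneg (fun i _ => besq_nonneg ht0 (hθ i) (hx i) (hy i))]
    have h1 : ∀ i : Fin n, ENNReal.ofReal (besqDens t (θ i) (x i) (y i))
        = ∑' k : ℕ, ENNReal.ofReal (bTerm (θ i) (x i) (y i) k t) := fun i => by
      rw [besq_eq ht0 (hθ i) (hy i), ENNReal.ofReal_tsum_of_nonneg
        (fun k => bTerm_nonneg (hθ i) (hx i).le (hy i).le ht0.le k)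
        (summable_bTerm ht0 (hθ i) (hx i) (hy i))]
    rw [Finset.prod_congr rfl (fun i _ => h1 i), prod_tsum_ennreal]
    refine tsum_congr fun k => ?_
    rw [← ENNReal.ofReal_prod_of_nonneg
      (fun i _ => bTerm_nonneg (hθ i) (hx i).le (hy i).le ht0.le (k i))]
    exact congrArg ENNReal.ofReal (prod_bTerm θ x y k ht0)
  -- the main ENNReal computation
  have hmain : ∫⁻ t in Ioi (0:ℝ), ENNReal.ofReal (∏ i, besqDens t (θ i) (x i) (y i))
      = ∑' m : ℕ, ENNReal.ofReal
          ((1/2 * (∑ i, (x i + y i)) ^ ((1:ℝ) - (∑ i, θ i)/2)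
              * ∏ i, (y i) ^ (θ i/2 - 1 : ℝ)) *
            (Real.Gamma ((∑ i, θ i)/2 - 1 + 2*(m:ℝ))
              * ((∑ i, (x i + y i)) ^ (-(2:ℝ)*(m:ℝ)) / (m.factorial:ℝ)) *
              ∑ k ∈ multiIdx n m, (Nat.multinomial Finset.univ k : ℝ) *
                ∏ i, (x i * y i) ^ (k i) / Real.Gamma (θ i/2 + (k i)))) := by
    rw [setLIntegral_congr_fun measurableSet_Ioi hpt]
    rw [lintegral_tsum (fun k => (meas_pot (P1 k) _ _).aemeasurable)]
    have hk : ∀ k : Fin n → ℕ,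
        ∫⁻ t in Ioi (0:ℝ), ENNReal.ofReal (P1 k *
          (t ^ (-((∑ i, θ i)/2 + 2*(((∑ i, k i : ℕ)):ℝ)))
            * Real.exp (-(∑ i, (x i + y i))/(2*t))))
        = ENNReal.ofReal (P1 k) * ENNReal.ofReal
            (((∑ i, (x i + y i))/2) ^ (1 - ((∑ i, θ i)/2 + 2*(((∑ i, k i : ℕ)):ℝ)))
              * Real.Gamma ((∑ i, θ i)/2 + 2*(((∑ i, k i : ℕ)):ℝ) - 1)) := by
      intro k
      have ha : 1 < (∑ i, θ i)/2 + 2*(((∑ i, k i : ℕ)):ℝ) := by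
        have : (0:ℝ) ≤ 2*(((∑ i, k i : ℕ)):ℝ) := by positivity
        linarith
      calc ∫⁻ t in Ioi (0:ℝ), ENNReal.ofReal (P1 k *
            (t ^ (-((∑ i, θ i)/2 + 2*(((∑ i, k i : ℕ)):ℝ)))
              * Real.exp (-(∑ i, (x i + y i))/(2*t))))
          = ∫⁻ t in Ioi (0:ℝ), ENNReal.ofReal (P1 k) * ENNReal.ofReal
              (t ^ (-((∑ i, θ i)/2 + 2*(((∑ i, k i : ℕ)):ℝ)))
                * Real.exp (-(∑ i, (x i + y i))/(2*t))) := by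
            refine lintegral_congr fun t => ENNReal.ofReal_mul (hP1nonneg k)
        _ = ENNReal.ofReal (P1 k) * ∫⁻ t in Ioi (0:ℝ), ENNReal.ofReal
              (t ^ (-((∑ i, θ i)/2 + 2*(((∑ i, k i : ℕ)):ℝ)))
                * Real.exp (-(∑ i, (x i + y i))/(2*t))) := by
            rw [lintegral_const_mul]
            exact ((measurable_id.pow measurable_const).mul (Real.measurable_exp.comp
              (measurable_const.div (measurable_const.mul measurable_id)))).ennreal_ofReal
        _ = _ := by rw [lintegral_pot ha hS]
    rw [tsum_congr hk]
    rw [tsum_group_ennreal (fun k => ENNReal.ofReal (P1 k) * ENNReal.ofReal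
      (((∑ i, (x i + y i))/2) ^ (1 - ((∑ i, θ i)/2 + 2*(((∑ i, k i : ℕ)):ℝ)))
        * Real.Gamma ((∑ i, θ i)/2 + 2*(((∑ i, k i : ℕ)):ℝ) - 1)))]
    refine tsum_congr fun m => ?_
    have hsum : ∀ k ∈ multiIdx n m,
        ENNReal.ofReal (P1 k) * ENNReal.ofReal
          (((∑ i, (x i + y i))/2) ^ (1 - ((∑ i, θ i)/2 + 2*(((∑ i, k i : ℕ)):ℝ)))
            * Real.Gamma ((∑ i, θ i)/2 + 2*(((∑ i, k i : ℕ)):ℝ) - 1))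
        = ENNReal.ofReal (P1 k *
            (((∑ i, (x i + y i))/2) ^ (1 - ((∑ i, θ i)/2 + 2*(m:ℝ)))
              * Real.Gamma ((∑ i, θ i)/2 + 2*(m:ℝ) - 1))) := by
      intro k hk
      rw [mem_multiIdx.mp hk, ← ENNReal.ofReal_mul (hP1nonneg k)]
    rw [Finset.sum_congr rfl hsum, ← ENNReal.ofReal_sum_of_nonneg]
    · refine congrArg ENNReal.ofReal ?_
      exact sum_multiIdx_eq θ x y hθ hS rfl m
    · intro k hk
      have hG : (0:ℝ) < Real.Gamma ((∑ i, θ i)/2 + 2*(m:ℝ) - 1) := by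
        apply Real.Gamma_pos_of_pos
        have : (0:ℝ) ≤ 2*(m:ℝ) := by positivity
        linarith
      have h1 := hP1nonneg k
      positivity
  -- nonnegativity of the series terms
  have htermnn : ∀ m : ℕ, 0 ≤ Real.Gamma ((∑ i, θ i)/2 - 1 + 2*(m:ℝ))
      * ((∑ i, (x i + y i)) ^ (-(2:ℝ)*(m:ℝ)) / (m.factorial:ℝ)) *
      ∑ k ∈ multiIdx n m, (Nat.multinomial Finset.univ k : ℝ) *
        ∏ i, (x i * y i) ^ (k i) / Real.Gamma (θ i/2 + (k i)) := by
    intro m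
    have hG : (0:ℝ) < Real.Gamma ((∑ i, θ i)/2 - 1 + 2*(m:ℝ)) := by
      apply Real.Gamma_pos_of_pos
      have : (0:ℝ) ≤ 2*(m:ℝ) := by positivity
      linarith
    refine mul_nonneg (mul_nonneg hG.le (by positivity)) ?_
    refine Finset.sum_nonneg fun k _ => mul_nonneg (by positivity) ?_
    refine Finset.prod_nonneg fun i _ => ?_
    have hGi : (0:ℝ) < Real.Gamma (θ i/2 + (k i)) :=
      Real.Gamma_pos_of_pos (by have := hθ i; positivity)
    have := hx i; have := hy i
    positivity
  have hPnn : (0:ℝ) ≤ 1/2 * (∑ i, (x i + y i)) ^ ((1:ℝ) - (∑ i, θ i)/2)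
      * ∏ i, (y i) ^ (θ i/2 - 1 : ℝ) := by
    have : (0:ℝ) ≤ ∏ i, (y i) ^ (θ i/2 - 1 : ℝ) :=
      Finset.prod_nonneg fun i _ => by have := hy i; positivity
    positivity
  -- a.e. strong measurability of the integrand
  have hmeasg : Measurable (fun t : ℝ => (∑' k : Fin n → ℕ, ENNReal.ofReal (P1 k *
      (t ^ (-((∑ i, θ i)/2 + 2*(((∑ i, k i : ℕ)):ℝ)))
        * Real.exp (-(∑ i, (x i + y i))/(2*t))))).toReal) :=
    (Measurable.ennreal_tsum fun k => meas_pot (P1 k) _ _).ennreal_toReal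
  have hnn : 0 ≤ᵐ[volume.restrict (Ioi (0:ℝ))] fun t => ∏ i, besqDens t (θ i) (x i) (y i) := by
    refine (ae_restrict_iff' measurableSet_Ioi).2 (Filter.Eventually.of_forall fun t ht => ?_)
    exact Finset.prod_nonneg fun i _ => besq_nonneg ht (hθ i) (hx i) (hy i)
  have hsm : AEStronglyMeasurable (fun t => ∏ i, besqDens t (θ i) (x i) (y i))
      (volume.restrict (Ioi (0:ℝ))) := by
    refine (hmeasg.aestronglyMeasurable).congr ?_
    refine (ae_restrict_iff' measurableSet_Ioi).2 (Filter.Eventually.of_forall fun t ht => ?_)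
    dsimp only
    rw [← hpt t ht, ENNReal.toReal_ofReal
      (Finset.prod_nonneg fun i _ => besq_nonneg ht (hθ i) (hx i) (hy i))]
  rw [MeasureTheory.integral_eq_lintegral_of_nonneg_ae hnn hsm, hmain,
    ENNReal.tsum_toReal_eq (fun m => ENNReal.ofReal_ne_top)]
  unfold potKernel
  rw [show (∑' m : ℕ, (ENNReal.ofReal
      ((1/2 * (∑ i, (x i + y i)) ^ ((1:ℝ) - (∑ i, θ i)/2) * ∏ i, (y i) ^ (θ i/2 - 1 : ℝ)) *
        (Real.Gamma ((∑ i, θ i)/2 - 1 + 2*(m:ℝ))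
          * ((∑ i, (x i + y i)) ^ (-(2:ℝ)*(m:ℝ)) / (m.factorial:ℝ)) *
          ∑ k ∈ multiIdx n m, (Nat.multinomial Finset.univ k : ℝ) *
            ∏ i, (x i * y i) ^ (k i) / Real.Gamma (θ i/2 + (k i))))).toReal)
      = ∑' m : ℕ,
        (1/2 * (∑ i, (x i + y i)) ^ ((1:ℝ) - (∑ i, θ i)/2) * ∏ i, (y i) ^ (θ i/2 - 1 : ℝ)) *
        (Real.Gamma ((∑ i, θ i)/2 - 1 + 2*(m:ℝ))
          * ((∑ i, (x i + y i)) ^ (-(2:ℝ)*(m:ℝ)) / (m.factorial:ℝ)) *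
          ∑ k ∈ multiIdx n m, (Nat.multinomial Finset.univ k : ℝ) *
            ∏ i, (x i * y i) ^ (k i) / Real.Gamma (θ i/2 + (k i))) from
    tsum_congr fun m => ENNReal.toReal_ofReal (mul_nonneg hPnn (htermnn m))]
  rw [tsum_mul_left]
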